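/- Let T be a complex matrix with trace(T^n) ≠ 0 for some n ≥ 1. Then there exist arbitrarily large k with trace(T^k) ≠ 0; more precisely, for every l ≥ 1 there exists m with 1 ≤ m ≤ (size of T) such that trace(T^{nlm}) ≠ 0. -/

import Mathlib

open Module LinearMap Set

namespace Stmt15Aux

variable {V : Type*} [AddCommGroup V] [Module ℂ V] [FiniteDimensional ℂ V]

lemma hfin (f : Module.End ℂ V) : {μ : ℂ | f.maxGenEigenspace μ ≠ ⊥}.Finite :=
  WellFoundedGT.finite_ne_bot_of_iSupIndep f.independent_maxGenEigenspace

lemma mapsTo (f : Module.End ℂ V) (k : ℕ) (μ : ℂ) :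
    MapsTo (f ^ k) (f.maxGenEigenspace μ) (f.maxGenEigenspace μ) :=
  Module.End.mapsTo_maxGenEigenspace_of_comm ((Commute.refl f).pow_right k) μ

lemma trace_restrict_pow (f : Module.End ℂ V) (μ : ℂ) (k : ℕ) :
    trace ℂ (f.maxGenEigenspace μ) ((f ^ k).restrict (mapsTo f k μ)) =
      μ ^ k * (finrank ℂ (f.maxGenEigenspace μ) : ℂ) := by
  have hm1 : MapsTo f (f.maxGenEigenspace μ) (f.maxGenEigenspace μ) :=
    Module.End.mapsTo_maxGenEigenspace_of_comm rfl μ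
  set g : Module.End ℂ (f.maxGenEigenspace μ) := f.restrict hm1 with hg
  have hres : (f ^ k).restrict (mapsTo f k μ) = g ^ k := by
    rw [hg, Module.End.pow_restrict k hm1]
  rw [hres]
  have hnil : IsNilpotent (g - algebraMap ℂ (Module.End ℂ (f.maxGenEigenspace μ)) μ) := by
    have hsub : MapsTo (f - algebraMap ℂ (Module.End ℂ V) μ)
        (f.maxGenEigenspace μ) (f.maxGenEigenspace μ) :=
      Module.End.mapsTo_maxGenEigenspace_of_comm
        (Algebra.mul_sub_algebraMap_commutes f μ) μ
    have := f.isNilpotent_restrict_maxGenEigenspace_sub_algebraMap μ hsub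
    have heq : g - algebraMap ℂ (Module.End ℂ (f.maxGenEigenspace μ)) μ =
        (f - algebraMap ℂ (Module.End ℂ V) μ).restrict hsub := by
      ext x
      simp [g, LinearMap.restrict_apply, Module.algebraMap_end_apply]
      rfl
    rwa [heq]
  clear hres
  induction k with
  | zero => simp [LinearMap.trace_one]
  | succ k ih =>
      rw [pow_succ, Module.End.mul_eq_comp, LinearMap.trace_comp_eq_mul_of_commute_of_isNilpotent μ
        ((Commute.refl g).pow_left k) hnil, ih]
      ring

lemma trace_pow_eq (f : Module.End ℂ V) (k : ℕ) :
    trace ℂ V (f ^ k) =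
      ∑ μ ∈ (hfin f).toFinset, μ ^ k * (finrank ℂ (f.maxGenEigenspace μ) : ℂ) := by
  have hds := DirectSum.isInternal_submodule_of_iSupIndep_of_iSup_eq_top
    f.independent_maxGenEigenspace f.iSup_maxGenEigenspace_eq_top
  rw [LinearMap.trace_eq_sum_trace_restrict' hds (hfin f) (fun μ => mapsTo f k μ)]
  exact Finset.sum_congr rfl fun μ _ => trace_restrict_pow f μ k

lemma card_le (f : Module.End ℂ V) : (hfin f).toFinset.card ≤ finrank ℂ V := by
  classical
  letI i1 : Fintype ↥{μ : ℂ | f.maxGenEigenspace μ ≠ ⊥} := (hfin f).fintype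
  letI i2 : Fintype {μ : ℂ // f.maxGenEigenspace μ ≠ ⊥} := i1
  have hle := f.independent_maxGenEigenspace.subtype_ne_bot_le_finrank
    (p := fun μ : ℂ => f.maxGenEigenspace μ)
  rw [Set.Finite.card_toFinset]
  exact hle

end Stmt15Aux

theorem stmt_15 (N : ℕ) (T : Matrix (Fin N) (Fin N) ℂ)
    (n : ℕ) (hn : 1 ≤ n) (h : (T ^ n).trace ≠ 0) :
    (∀ K : ℕ, ∃ k, K ≤ k ∧ (T ^ k).trace ≠ 0) ∧
    (∀ l : ℕ, 1 ≤ l → ∃ m, 1 ≤ m ∧ m ≤ N ∧ (T ^ (n * l * m)).trace ≠ 0) := by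
  classical
  set f : Module.End ℂ (Fin N → ℂ) := Matrix.toLinAlgEquiv' T with hf
  have htr : ∀ k : ℕ, (T ^ k).trace =
      ∑ μ ∈ (Stmt15Aux.hfin f).toFinset,
        μ ^ k * (Module.finrank ℂ (f.maxGenEigenspace μ) : ℂ) := by
    intro k
    rw [← Stmt15Aux.trace_pow_eq f k, hf, ← map_pow]
    rw [LinearMap.trace_eq_matrix_trace ℂ (Pi.basisFun ℂ (Fin N)),
      LinearMap.toMatrix_eq_toMatrix']
    congr 1
    exact (LinearMap.toMatrix'_toLin' (T ^ k)).symm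
  set s : Finset ℂ := (Stmt15Aux.hfin f).toFinset with hs
  have hcard : s.card ≤ N := by
    have := Stmt15Aux.card_le f
    simpa [hs, Module.finrank_fin_fun] using this
  -- d μ positive for μ ∈ s
  have hd : ∀ μ ∈ s, 0 < Module.finrank ℂ (f.maxGenEigenspace μ) := by
    intro μ hμ
    rw [hs, Set.Finite.mem_toFinset] at hμ
    exact Module.finrank_pos_iff.mpr (Submodule.nontrivial_iff_ne_bot.mpr hμ)
  -- the main claim
  have main : ∀ l : ℕ, 1 ≤ l → ∃ m, 1 ≤ m ∧ m ≤ N ∧ (T ^ (n * l * m)).trace ≠ 0 := by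
    intro l hl
    by_contra hcon
    push_neg at hcon
    -- there is a nonzero eigenvalue
    have hex : ∃ μ ∈ s, μ ≠ 0 := by
      by_contra hno
      push_neg at hno
      apply h
      rw [htr n]
      refine Finset.sum_eq_zero fun μ hμ => ?_
      rw [hno μ hμ, zero_pow (by omega), zero_mul]
    obtain ⟨μ0, hμ0s, hμ0⟩ := hex
    set s' : Finset ℂ := s.filter (· ≠ 0) with hs'
    set t : Finset ℂ := s'.image (fun μ => μ ^ (n * l)) with ht
    have htne : t.Nonempty := ⟨μ0 ^ (n * l), Finset.mem_image_of_mem _ (by simp [hs', hμ0s, hμ0])⟩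
    have ht0 : ∀ ν ∈ t, ν ≠ 0 := by
      intro ν hν
      rw [ht, Finset.mem_image] at hν
      obtain ⟨μ, hμ, rfl⟩ := hν
      rw [hs', Finset.mem_filter] at hμ
      exact pow_ne_zero _ hμ.2
    set c : ℂ → ℂ := fun ν => ∑ μ ∈ s'.filter (fun μ => μ ^ (n * l) = ν),
      (Module.finrank ℂ (f.maxGenEigenspace μ) : ℂ) with hc
    have hcpos : ∀ ν ∈ t, c ν ≠ 0 := by
      intro ν hν
      rw [ht, Finset.mem_image] at hν
      obtain ⟨μ, hμ, rfl⟩ := hν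
      have hμs : μ ∈ s := (Finset.mem_filter.mp hμ).1
      have : (0 : ℝ) < ∑ μ' ∈ s'.filter (fun μ' => μ' ^ (n * l) = μ ^ (n * l)),
          (Module.finrank ℂ (f.maxGenEigenspace μ') : ℝ) := by
        refine Finset.sum_pos' (fun μ' hμ' => by positivity) ⟨μ, ?_, ?_⟩
        · exact Finset.mem_filter.mpr ⟨hμ, rfl⟩
        · exact_mod_cast hd μ hμs
      intro hzero
      rw [hc] at hzero
      have : (∑ μ' ∈ s'.filter (fun μ' => μ' ^ (n * l) = μ ^ (n * l)),
          (Module.finrank ℂ (f.maxGenEigenspace μ') : ℝ)) = 0 := by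
        have := congrArg Complex.re hzero
        simpa [Complex.re_sum] using this
      linarith
    -- trace sums grouped by fibers
    have hsum : ∀ m : ℕ, 1 ≤ m → (T ^ (n * l * m)).trace = ∑ ν ∈ t, c ν * ν ^ m := by
      intro m hm
      rw [htr]
      have h1 : ∑ μ ∈ s, μ ^ (n * l * m) * (Module.finrank ℂ (f.maxGenEigenspace μ) : ℂ)
          = ∑ μ ∈ s', μ ^ (n * l * m) * (Module.finrank ℂ (f.maxGenEigenspace μ) : ℂ) := by
        rw [hs']
        refine (Finset.sum_filter_of_ne ?_).symm
        intro μ hμ hne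
        rintro rfl
        have hnlm : n * l * m ≠ 0 :=
          Nat.mul_ne_zero (Nat.mul_ne_zero (by omega) (by omega)) (by omega)
        exact hne (by rw [zero_pow hnlm, zero_mul])
      rw [h1, hc]
      rw [← Finset.sum_fiberwise_of_maps_to (g := fun μ : ℂ => μ ^ (n * l)) (t := t)
        (fun μ hμ => Finset.mem_image_of_mem _ hμ)]
      refine Finset.sum_congr rfl fun ν hν => ?_
      rw [Finset.sum_mul]
      refine Finset.sum_congr rfl fun μ hμ => ?_
      have : μ ^ (n * l) = ν := (Finset.mem_filter.mp hμ).2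
      rw [← this, ← pow_mul, mul_comm ((Module.finrank ℂ (f.maxGenEigenspace μ)) : ℂ)]
    -- Vandermonde contradiction
    set r : ℕ := t.card with hr
    have hrN : r ≤ N := le_trans (Finset.card_image_le.trans (Finset.card_filter_le _ _)) hcard
    have hrpos : 0 < r := Finset.card_pos.mpr htne
    set e := t.equivFin with he
    set fv : Fin r → ℂ := fun i => (e.symm i : ℂ) with hfv
    have hfvinj : Function.Injective fv := fun i j hij => by
      apply e.symm.injective
      exact Subtype.ext hij
    have hfv0 : ∀ i, fv i ≠ 0 := fun i => ht0 _ (e.symm i).2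
    have hzero : ∀ i : Fin r, ∑ j, (c (fv j) * fv j) * fv j ^ (i : ℕ) = 0 := by
      intro i
      have hmem : (1 : ℕ) ≤ (i : ℕ) + 1 := by omega
      have hle : (i : ℕ) + 1 ≤ N := by
        have := i.2; omega
      have hC := hcon ((i : ℕ) + 1) hmem hle
      rw [hsum ((i : ℕ) + 1) hmem] at hC
      have step : ∑ j : Fin r, c (fv j) * fv j ^ ((i : ℕ) + 1)
          = ∑ ν ∈ t, c ν * ν ^ ((i : ℕ) + 1) := by
        rw [← Finset.sum_coe_sort t (fun ν => c ν * ν ^ ((i : ℕ) + 1))]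
        exact Equiv.sum_comp e.symm (fun ν : t => c (ν : ℂ) * (ν : ℂ) ^ ((i : ℕ) + 1))
      calc ∑ j : Fin r, c (fv j) * fv j * fv j ^ (i : ℕ)
          = ∑ j : Fin r, c (fv j) * fv j ^ ((i : ℕ) + 1) :=
            Finset.sum_congr rfl fun j _ => by ring
        _ = ∑ ν ∈ t, c ν * ν ^ ((i : ℕ) + 1) := step
        _ = 0 := hC
    have := Matrix.eq_zero_of_forall_pow_sum_mul_pow_eq_zero hfvinj hzero
    have h0 : c (fv ⟨0, hrpos⟩) * fv ⟨0, hrpos⟩ = 0 := congrFun this ⟨0, hrpos⟩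
    rcases mul_eq_zero.mp h0 with hc0 | hv0
    · exact hcpos _ (e.symm ⟨0, hrpos⟩).2 hc0
    · exact hfv0 ⟨0, hrpos⟩ hv0
  refine ⟨fun K => ?_, main⟩
  obtain ⟨m, hm1, hmN, hmtr⟩ := main (K + 1) (by omega)
  have h1 : K + 1 ≤ n * (K + 1) := Nat.le_mul_of_pos_left _ (by omega)
  have h2 : n * (K + 1) ≤ n * (K + 1) * m := Nat.le_mul_of_pos_right _ (by omega)
  exact ⟨n * (K + 1) * m, by omega, hmtr⟩
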